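/- Let M₁, …, M_t be Boolean adjacency matrices of rooted trees on [n] with self-loops, and suppose that in the Boolean product M₁ ⋯ M_t no row is all-true. Then every column of M₁ ⋯ M_t that is not all-false differs from the corresponding column of M₁ ⋯ M_{t+1} only by possibly gaining true entries, and the total number of true entries in the product strictly increases from round t to round t+1. -/
import Mathlib


namespace Broadcast

/-- `n × n` Boolean matrices. -/
abbrev BMatrix (n : ℕ) := Fin n → Fin n → Bool

/-- Boolean matrix multiplication: `(M · N)(x,y) = ∃ z, M(x,z) ∧ N(z,y)`. -/
def bmul {n : ℕ} (M N : BMatrix n) : BMatrix n :=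
  fun x y => decide (∃ z, M x z = true ∧ N z y = true)

/-- The Boolean product `M₁ ⋯ M_t` (the empty product is the identity matrix). -/
def bprodUpTo {n : ℕ} (M : ℕ → BMatrix n) : ℕ → BMatrix n
  | 0 => fun x y => decide (x = y)
  | t + 1 => bmul (bprodUpTo M t) (M (t + 1))

/-- `M` is the adjacency matrix of a rooted tree on `[n]` with self-loops, with root `r`
and parent map `p`. -/
structure IsRootedTreeMatrix {n : ℕ} (M : BMatrix n) (r : Fin n) (p : Fin n → Fin n) :
    Prop where
  loops : ∀ x, M x x = true
  parent_edge : ∀ y, y ≠ r → M (p y) y = true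
  parent_ne : ∀ y, y ≠ r → p y ≠ y
  edges : ∀ x y, M x y = true → x = y ∨ (y ≠ r ∧ x = p y)
  reach : ∀ y, Relation.ReflTransGen (fun a b => M a b = true) r y

/-- If `M₁, …` are adjacency matrices of rooted trees with self-loops and no row of the
Boolean product `M₁ ⋯ M_t` is all-true, then every not-all-false column of `M₁ ⋯ M_t`
only gains true entries in `M₁ ⋯ M_{t+1}`, and the total number of true entries strictly
increases from round `t` to round `t + 1`. -/
theorem column_monotone_and_count_increase {n : ℕ} (M : ℕ → BMatrix n) (t : ℕ)
    (htree : ∀ i, 1 ≤ i → ∃ r p, IsRootedTreeMatrix (M i) r p)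
    (hnorow : ∀ x : Fin n, ∃ y, bprodUpTo M t x y = false) :
    (∀ y : Fin n, (∃ x, bprodUpTo M t x y = true) →
      ∀ x, bprodUpTo M t x y = true → bprodUpTo M (t + 1) x y = true) ∧
    (Finset.univ.filter fun e : Fin n × Fin n => bprodUpTo M t e.1 e.2 = true).card <
      (Finset.univ.filter fun e : Fin n × Fin n =>
        bprodUpTo M (t + 1) e.1 e.2 = true).card := by
  classical
  obtain ⟨r, p, htr⟩ := htree (t + 1) (by omega)
  -- monotonicity: any true entry stays true
  have hmono : ∀ x y, bprodUpTo M t x y = true → bprodUpTo M (t + 1) x y = true := by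
    intro x y h
    show bmul (bprodUpTo M t) (M (t + 1)) x y = true
    exact decide_eq_true ⟨y, h, htr.loops y⟩
  -- diagonal is always true
  have hdiag : ∀ s : ℕ, ∀ x : Fin n, bprodUpTo M s x x = true := by
    intro s
    induction s with
    | zero => intro x; exact decide_eq_true rfl
    | succ s ih =>
      intro x
      obtain ⟨r', p', htr'⟩ := htree (s + 1) (by omega)
      exact decide_eq_true ⟨x, ih x, htr'.loops x⟩
  refine ⟨fun y _ x h => hmono x y h, ?_⟩
  -- find a new true entry in row r
  have hnew : ∃ b, bprodUpTo M t r b = false ∧ bprodUpTo M (t + 1) r b = true := by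
    obtain ⟨y0, hy0⟩ := hnorow r
    by_contra hcon
    push_neg at hcon
    -- S := row r at time t is closed under tree edges, contains r, so contains y0
    have hclosed : ∀ a b, bprodUpTo M t r a = true → M (t + 1) a b = true →
        bprodUpTo M t r b = true := by
      intro a b ha hab
      rcases htr.edges a b hab with rfl | ⟨hbr, rfl⟩
      · exact ha
      · by_contra hb
        have hbf : bprodUpTo M t r b = false := by
          cases hx : bprodUpTo M t r b
          · rfl
          · exact absurd hx hb
        have : bprodUpTo M (t + 1) r b = true :=
          decide_eq_true ⟨p b, ha, htr.parent_edge b hbr⟩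
        exact absurd this (by simpa [hbf] using hcon b hbf)
    have hall : ∀ y, bprodUpTo M t r y = true := by
      intro y
      have hr := htr.reach y
      clear hy0
      induction hr with
      | refl => exact hdiag t r
      | tail _ hedge ih => exact hclosed _ _ ih hedge
    rw [hall y0] at hy0
    exact absurd hy0 (by simp)
  obtain ⟨b, hbf, hbt⟩ := hnew
  apply Finset.card_lt_card
  rw [Finset.ssubset_iff_of_subset]
  · exact ⟨(r, b), by simp [hbt], by simp [hbf]⟩
  · intro e he
    simp only [Finset.mem_filter, Finset.mem_univ, true_and] at he ⊢
    exact hmono e.1 e.2 he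

end Broadcast
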